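/- Let F be a field and let A be an n×n matrix whose entries are polynomials in F[y, x], with degree in x at most d (where d ≥ 1), degree in y at most e, and with det A ≠ 0. View A as a matrix over F(y)[x], where F(y) is the field of rational functions in y, and let U be the unique unimodular matrix over F(y)[x] such that H = U·A is in Hermite normal form. Then for every entry of H and of U, every coefficient (an element of F(y), written in lowest terms as a quotient of polynomials in y) has numerator of degree at most n²·d·e and denominator of degree at most n²·d·e; consequently the least common multiple of all denominators occurring in H and U has degree at most n²·d·e in y. -/

import Mathlib

open Polynomial


lemma aux_exists_submatrix_det_ne_zero {K : Type*} [Field K] {κ ι : Type*} [Fintype κ] [Fintype ι]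
    [DecidableEq ι] (E : Matrix κ ι K) (hE : Function.Injective E.mulVec) :
    ∃ sel : ι → κ, (E.submatrix sel id).det ≠ 0 := by
  classical
  set V := κ → K
  set cols : ι → V := fun q p => E p q with hcolsdef
  have hmv : ∀ g : ι → K, E.mulVec g = ∑ q, g q • cols q := by
    intro g; funext p
    rw [Finset.sum_apply]
    refine Finset.sum_congr rfl fun x _ => ?_
    exact mul_comm _ _
  have hli : LinearIndependent K cols := by
    rw [Fintype.linearIndependent_iff]
    intro g hg
    have : E.mulVec g = E.mulVec 0 := by
      rw [hmv, hg, Matrix.mulVec_zero]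
    have := hE this
    intro q; simp [this]
  set W := Submodule.span K (Set.range cols) with hWdef
  have hWfin : Module.finrank K W = Fintype.card ι := finrank_span_eq_card hli
  set f : κ → Module.Dual K W := fun p => (LinearMap.proj p).comp W.subtype with hfdef
  set Φ := Submodule.span K (Set.range f) with hΦdef
  have hcoann : Φ.dualCoannihilator = ⊥ := by
    rw [Submodule.eq_bot_iff]
    intro w hw
    rw [Submodule.mem_dualCoannihilator] at hw
    have : (w : V) = 0 := by
      funext p
      exact hw (f p) (Submodule.subset_span ⟨p, rfl⟩)
    exact Subtype.ext this
  have hΦtop : Φ = ⊤ := by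
    have h1 := Subspace.finrank_add_finrank_dualCoannihilator_eq Φ
    rw [hcoann, finrank_bot, add_zero] at h1
    apply Submodule.eq_top_of_finrank_eq
    rw [h1, Subspace.dual_finrank_eq]
  obtain ⟨b, hbsub, hbspan, hbli⟩ := exists_linearIndependent K (Set.range f)
  rw [← hΦdef, hΦtop] at hbspan
  let bas : Module.Basis b K (Module.Dual K W) := Module.Basis.mk hbli (by rw [Subtype.range_coe]; exact hbspan.ge)
  have : FiniteDimensional K (Module.Dual K W) := inferInstance
  have hbfin : Fintype b := FiniteDimensional.fintypeBasisIndex bas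
  have hcard : Fintype.card b = Fintype.card ι := by
    rw [← Module.finrank_eq_card_basis bas, Subspace.dual_finrank_eq, hWfin]
  let eqv : ι ≃ b := (Fintype.equivOfCardEq hcard).symm
  have hchoice : ∀ x : b, ∃ p : κ, f p = (x : Module.Dual K W) := fun x => hbsub x.2
  choose g hg using hchoice
  refine ⟨fun t => g (eqv t), ?_⟩
  intro hdet
  obtain ⟨u, hu0, hu⟩ := (Matrix.exists_mulVec_eq_zero_iff).2 hdet
  apply hu0
  have hxW : E.mulVec u ∈ W := by
    rw [hmv]
    exact Submodule.sum_mem _ fun q _ => Submodule.smul_mem _ _ (Submodule.subset_span ⟨q, rfl⟩)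
  set xW : W := ⟨E.mulVec u, hxW⟩ with hxWdef
  have hb0 : ∀ x : b, (x : Module.Dual K W) xW = 0 := by
    intro x
    have ht := congrFun hu (eqv.symm x)
    rw [← hg x]
    have : (E.submatrix (fun t => g (eqv t)) id).mulVec u (eqv.symm x)
        = E.mulVec u (g (eqv (eqv.symm x))) := by
      simp [Matrix.mulVec, dotProduct, Matrix.submatrix]
    rw [this] at ht
    simpa [f] using ht
  have hzero : xW = 0 := by
    rw [← Module.forall_dual_apply_eq_zero_iff K xW]
    intro φ
    have hφ : φ ∈ Submodule.span K b := by rw [hbspan]; trivial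
    induction hφ using Submodule.span_induction with
    | mem x hx => exact hb0 ⟨x, hx⟩
    | zero => simp
    | add x y _ _ hx hy => simp [LinearMap.add_apply, hx, hy]
    | smul c x _ hx => simp [LinearMap.smul_apply, hx]
  have : E.mulVec u = 0 := congrArg Subtype.val hzero
  exact hE (by rw [this, Matrix.mulVec_zero])


lemma aux_natDegree_det_le {R : Type*} [CommRing R] {m : Type*} [DecidableEq m] [Fintype m]
    (M : Matrix m m (Polynomial R)) (r : m → ℕ) (h : ∀ i j, (M i j).natDegree ≤ r i) :
    M.det.natDegree ≤ ∑ i, r i := by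
  rw [Matrix.det_apply']
  refine natDegree_sum_le_of_forall_le _ _ fun σ _ => ?_
  refine natDegree_mul_le.trans ?_
  rw [natDegree_intCast, zero_add]
  refine (natDegree_prod_le _ _).trans ?_
  calc ∑ i, (M (σ i) i).natDegree ≤ ∑ i, r (σ i) := Finset.sum_le_sum fun i _ => h _ _
    _ = ∑ i, r i := Equiv.sum_comp σ r

lemma aux_adjugate_natDegree_le {R : Type*} [CommRing R] {m : Type*} [DecidableEq m] [Fintype m]
    (M : Matrix m m (Polynomial R)) (e : ℕ) (h : ∀ i j, (M i j).natDegree ≤ e) (i j : m) :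
    ((Matrix.adjugate M) i j).natDegree ≤ (Fintype.card m - 1) * e := by
  rw [Matrix.adjugate_apply]
  refine (aux_natDegree_det_le _ (fun l => if l = j then 0 else e) ?_).trans ?_
  · intro l k
    rw [Matrix.updateRow_apply]
    by_cases hl : l = j
    · simp only [hl, if_pos rfl]
      rcases eq_or_ne k i with rfl | hk
      · simp
      · simp [Pi.single_apply, hk.symm]
    · simpa [hl] using h l k
  · rw [← Finset.add_sum_erase _ _ (Finset.mem_univ j), if_pos rfl, zero_add]
    have : ∀ l ∈ Finset.univ.erase j, (if l = j then 0 else e) = e := by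
      intro l hl
      rw [if_neg (Finset.mem_erase.1 hl).1]
    rw [Finset.sum_congr rfl this, Finset.sum_const, smul_eq_mul,
      Finset.card_erase_of_mem (Finset.mem_univ j), Finset.card_univ]

lemma aux_reduce_zero {K : Type*} [Field K] {n : ℕ} (H : Matrix (Fin n) (Fin n) (Polynomial K))
    (htri : ∀ i j : Fin n, j < i → H i j = 0)
    (hmonic : ∀ i : Fin n, (H i i).Monic)
    (c : Fin n → Polynomial K)
    (hdeg : ∀ j, (∑ l, c l * H l j).degree < (H j j).degree) :
    ∀ j, c j = 0 := by
  suffices h : ∀ N : ℕ, ∀ j : Fin n, (j : ℕ) < N → c j = 0 from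
    fun j => h n j j.isLt
  intro N
  induction N with
  | zero => exact fun j h => absurd h (Nat.not_lt_zero _)
  | succ N IH =>
    intro j hj
    have IH' : ∀ l : Fin n, l < j → c l = 0 := fun l hl =>
      IH l (lt_of_lt_of_le hl (Nat.lt_succ_iff.1 hj))
    have hsum : ∑ l, c l * H l j = c j * H j j := by
      refine Finset.sum_eq_single j ?_ (fun h => absurd (Finset.mem_univ j) h)
      intro l _ hlj
      rcases lt_or_gt_of_ne hlj with h | h
      · rw [IH' l h, zero_mul]
      · rw [htri l j h, mul_zero]
    have hd := hdeg j
    rw [hsum] at hd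
    by_contra hc
    have hne : H j j ≠ 0 := (hmonic j).ne_zero
    rw [degree_mul] at hd
    have h0 : (0 : WithBot ℕ) ≤ (c j).degree := zero_le_degree_iff.2 hc
    have : (H j j).degree ≤ (c j).degree + (H j j).degree := le_add_of_nonneg_left h0
    exact absurd (this.trans_lt hd) (lt_irrefl _)

lemma aux_fraction_bounds {F : Type*} [Field F] (p q : Polynomial F) (hq : q ≠ 0)
    (c : RatFunc F) (hc : c = algebraMap (Polynomial F) (RatFunc F) p / algebraMap _ _ q) :
    c.num.natDegree ≤ p.natDegree ∧ c.denom.natDegree ≤ q.natDegree ∧ c.denom ∣ q := by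
  subst hc
  have hd := RatFunc.denom_div_dvd p q
  refine ⟨?_, natDegree_le_of_dvd hd hq, hd⟩
  by_cases hp : p = 0
  · simp [hp]
  · exact natDegree_le_of_dvd (RatFunc.num_div_dvd p hq) hp

lemma aux_system {F : Type*} [Field F] {κ ι : Type*} [Fintype κ] [Fintype ι] [DecidableEq ι]
    (Ey : Matrix κ ι (Polynomial F)) (e : ℕ) (hEy : ∀ p q, (Ey p q).natDegree ≤ e)
    (hinj : Function.Injective (Ey.map (algebraMap (Polynomial F) (RatFunc F))).mulVec) :
    ∃ Δ : Polynomial F, Δ ≠ 0 ∧ Δ.natDegree ≤ Fintype.card ι * e ∧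
      ∀ z : ι → RatFunc F, ∀ w : κ → Polynomial F, (∀ p, (w p).natDegree = 0) →
        (Ey.map (algebraMap (Polynomial F) (RatFunc F))).mulVec z
          = (fun p => algebraMap (Polynomial F) (RatFunc F) (w p)) →
        ∀ q, ∃ N : Polynomial F, (N.natDegree + e ≤ Fintype.card ι * e) ∧
          z q = algebraMap (Polynomial F) (RatFunc F) N / algebraMap _ _ Δ := by
  classical
  set φ := algebraMap (Polynomial F) (RatFunc F) with hφdef
  set E := Ey.map φ with hEdef
  obtain ⟨sel, hsel⟩ := aux_exists_submatrix_det_ne_zero E hinj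
  set M0y := Ey.submatrix sel id with hM0ydef
  have hM0 : E.submatrix sel id = M0y.map φ := by
    ext p q; simp [Matrix.submatrix_apply, Matrix.map_apply, hEdef, hM0ydef]
  have hmapdet : φ M0y.det = (E.submatrix sel id).det := by
    rw [hM0]; exact (RingHom.map_det φ M0y)
  refine ⟨M0y.det, ?_, ?_, ?_⟩
  · intro h
    apply hsel
    rw [← hmapdet, h, map_zero]
  · refine (aux_natDegree_det_le M0y (fun _ => e) (fun i j => hEy _ _)).trans ?_
    simp [Finset.sum_const, Finset.card_univ]
  · intro z w hw hzw q
    have hdetu : IsUnit (E.submatrix sel id).det := isUnit_iff_ne_zero.2 hsel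
    have hM0z : (E.submatrix sel id).mulVec z = fun t => φ (w (sel t)) := by
      funext t
      have := congrFun hzw (sel t)
      simpa [Matrix.mulVec, dotProduct, Matrix.submatrix_apply] using this
    have hz : z = (E.submatrix sel id)⁻¹.mulVec (fun t => φ (w (sel t))) := by
      rw [← hM0z, Matrix.mulVec_mulVec, Matrix.nonsing_inv_mul _ hdetu, Matrix.one_mulVec]
    have hadj : (E.submatrix sel id).adjugate = (M0y.adjugate).map φ := by
      rw [hM0]
      have h := RingHom.map_adjugate φ M0y
      simpa [RingHom.mapMatrix_apply] using h.symm
    refine ⟨∑ t, M0y.adjugate q t * w (sel t), ?_, ?_⟩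
    · have hb : (∑ t, M0y.adjugate q t * w (sel t)).natDegree ≤ (Fintype.card ι - 1) * e := by
        refine natDegree_sum_le_of_forall_le _ _ fun t _ => ?_
        refine natDegree_mul_le.trans ?_
        rw [hw (sel t), add_zero]
        exact aux_adjugate_natDegree_le M0y e (fun i j => hEy _ _) q t
      have hcard : 1 ≤ Fintype.card ι := Fintype.card_pos_iff.2 ⟨q⟩
      calc (∑ t, M0y.adjugate q t * w (sel t)).natDegree + e
          ≤ (Fintype.card ι - 1) * e + e := by omega
        _ = Fintype.card ι * e := by
            cases h : Fintype.card ι with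
            | zero => omega
            | succ c => simp [h, Nat.succ_sub_one, Nat.succ_mul]
    · have := congrFun hz q
      rw [Matrix.inv_def] at this
      rw [this]
      rw [Ring.inverse_eq_inv']
      simp only [Matrix.smul_mulVec, Pi.smul_apply, smul_eq_mul]
      rw [hadj, ← hmapdet]
      rw [inv_mul_eq_div]
      congr 1
      simp only [Matrix.mulVec, dotProduct, Matrix.map_apply]
      rw [map_sum]
      exact Finset.sum_congr rfl fun t _ => (map_mul φ _ _).symm

lemma aux_arith (n d e : ℕ) (hd : 1 ≤ d) : n * ((n-1)*d+1) * e ≤ n^2*d*e := by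
  refine Nat.mul_le_mul_right e ?_
  cases n with
  | zero => simp
  | succ c =>
    have h : (c+1) * (c*d+1) ≤ (c+1)^2*d := by nlinarith
    simpa [Nat.succ_sub_one] using h

lemma aux_arith2 (n d : ℕ) (hn : 0 < n) : (n-1)*d + d = n*d := by
  cases n with
  | zero => omega
  | succ c => simp [Nat.succ_sub_one, Nat.succ_mul]

/-- A square matrix `H` over `K[x]` is in Hermite normal form if it is upper triangular,
its diagonal entries are monic, and each off-diagonal entry lying in a column whose
diagonal entry is nonzero has degree strictly less than that diagonal entry. -/
def IsHermiteNormalForm {K : Type*} [Field K] {n : ℕ}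
    (H : Matrix (Fin n) (Fin n) (Polynomial K)) : Prop :=
  (∀ i j : Fin n, j < i → H i j = 0) ∧
  (∀ i : Fin n, (H i i).Monic) ∧
  (∀ i j : Fin n, i ≠ j → H j j ≠ 0 → (H i j).degree < (H j j).degree)

set_option maxHeartbeats 1000000 in
/-- Coefficient degree bounds (in the parameter `y`) for the Hermite normal form over
`F(y)[x]` of a nonsingular matrix with entries in `F[y][x]` of degree at most `d` in `x`
and at most `e` in `y`.  An entry of `F[y][x] = (F[y])[x]` is lifted to `F(y)[x]` by
mapping its coefficients through `F[y] → F(y)`.  Every coefficient (an element of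
`F(y)` in lowest terms) of every entry of `H` and of the unimodular cofactor `U` has
numerator and denominator of degree at most `n²·d·e`, and there is a common denominator
`Δ` (hence also the lcm of all denominators) of degree at most `n²·d·e`. -/
theorem hermite_parametric_coefficient_degree_bounds
    {F : Type*} [Field F] {n : ℕ} (d e : ℕ) (hd : 1 ≤ d)
    (A : Matrix (Fin n) (Fin n) (Polynomial (Polynomial F)))
    (hAdet : A.det ≠ 0)
    (hAx : ∀ i j, (A i j).natDegree ≤ d)
    (hAy : ∀ i j k, ((A i j).coeff k).natDegree ≤ e)
    (U H : Matrix (Fin n) (Fin n) (Polynomial (RatFunc F)))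
    (hU : IsUnit U.det)
    (hUA : H = U * A.map (fun a => a.map (algebraMap (Polynomial F) (RatFunc F))))
    (hHermite : IsHermiteNormalForm H) :
    (∀ i j k, ((H i j).coeff k).num.natDegree ≤ n ^ 2 * d * e ∧
              ((H i j).coeff k).denom.natDegree ≤ n ^ 2 * d * e) ∧
    (∀ i j k, ((U i j).coeff k).num.natDegree ≤ n ^ 2 * d * e ∧
              ((U i j).coeff k).denom.natDegree ≤ n ^ 2 * d * e) ∧
    (∃ Δ : Polynomial F, Δ ≠ 0 ∧ Δ.natDegree ≤ n ^ 2 * d * e ∧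
      (∀ i j k, ((H i j).coeff k).denom ∣ Δ ∧ ((U i j).coeff k).denom ∣ Δ)) := by
  classical
  obtain ⟨hHtri, hHmon, hHred⟩ := hHermite
  set φ : Polynomial F →+* RatFunc F := algebraMap (Polynomial F) (RatFunc F) with hφdef
  have hφinj : Function.Injective φ := RatFunc.algebraMap_injective F
  set B : Matrix (Fin n) (Fin n) (Polynomial (RatFunc F)) :=
    A.map (fun a => a.map φ) with hBdef
  have hBapp : ∀ i j, B i j = (A i j).map φ := fun i j => rfl
  have hBco : ∀ l j t, (B l j).coeff t = φ ((A l j).coeff t) := by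
    intro l j t; rw [hBapp, coeff_map]
  have hBdeg : ∀ i j, (B i j).natDegree ≤ d := fun i j =>
    (natDegree_map_le).trans (hAx i j)
  have hBdet : B.det = (A.det).map φ := by
    rw [hBdef, ← Polynomial.coe_mapRingHom]
    exact ((Polynomial.mapRingHom φ).map_det A).symm
  have hdet0 : B.det ≠ 0 := by
    rw [hBdet]
    intro h
    exact hAdet (Polynomial.map_injective φ hφinj (by simpa using h))
  have hHne : ∀ j, H j j ≠ 0 := fun j => (hHmon j).ne_zero
  -- degrees of H
  have hdetH : H.det = ∏ j, H j j :=
    Matrix.det_of_upperTriangular (fun i j h => hHtri i j h)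
  have hUdet0 : U.det ≠ 0 := hU.ne_zero
  have hsumδ : ∑ j, (H j j).natDegree = B.det.natDegree := by
    have h1 : H.det = U.det * B.det := by rw [hUA, Matrix.det_mul]
    have h2 : (∏ j, H j j).natDegree = ∑ j, (H j j).natDegree :=
      natDegree_prod _ _ (fun j _ => hHne j)
    rw [← h2, ← hdetH, h1, natDegree_mul hUdet0 hdet0,
      natDegree_eq_zero_of_isUnit hU, zero_add]
  have hdetBnd : B.det.natDegree ≤ n * d := by
    refine (aux_natDegree_det_le B (fun _ => d) hBdeg).trans ?_
    simp [Finset.sum_const, Finset.card_univ, mul_comm]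
  have hδle : ∀ j, (H j j).natDegree ≤ n*d := by
    intro j
    refine le_trans ?_ (le_trans (le_of_eq hsumδ) hdetBnd)
    exact Finset.single_le_sum (f := fun j => (H j j).natDegree)
      (fun _ _ => Nat.zero_le _) (Finset.mem_univ j)
  have hHdegB : ∀ i j, (H i j).natDegree ≤ B.det.natDegree := by
    intro i j
    have hδB : (H j j).natDegree ≤ B.det.natDegree := by
      rw [← hsumδ]
      exact Finset.single_le_sum (f := fun j => (H j j).natDegree)
        (fun _ _ => Nat.zero_le _) (Finset.mem_univ j)
    rcases eq_or_ne i j with rfl | hij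
    · exact hδB
    · exact le_trans (natDegree_le_natDegree (hHred i j hij (hHne j)).le) hδB
  have hadjB : ∀ i j, (B.adjugate i j).natDegree ≤ (n-1)*d := by
    have h := aux_adjugate_natDegree_le B d hBdeg
    simpa [Fintype.card_fin] using h
  -- degree bound for U
  have hUdeg : ∀ i j, (U i j).natDegree ≤ (n-1)*d := by
    have h2 : B.det • U = H * B.adjugate := by
      have h3 : U * (B * B.adjugate) = H * B.adjugate := by rw [← Matrix.mul_assoc, ← hUA]
      rw [Matrix.mul_adjugate, Matrix.mul_smul, Matrix.mul_one] at h3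
      exact h3
    intro i j
    by_cases hU0 : U i j = 0
    · simp [hU0]
    · have h4' : (B.det • U) i j = (H * B.adjugate) i j := by rw [h2]
      have h4 : B.det * U i j = ∑ l, H i l * B.adjugate l j := by
        simpa [Matrix.smul_apply, smul_eq_mul, Matrix.mul_apply] using h4'
      have h5 : (B.det * U i j).natDegree = B.det.natDegree + (U i j).natDegree :=
        natDegree_mul hdet0 hU0
      have h6 : (∑ l, H i l * B.adjugate l j).natDegree ≤ B.det.natDegree + (n-1)*d := by
        refine natDegree_sum_le_of_forall_le _ _ fun l _ => ?_
        exact natDegree_mul_le.trans (add_le_add (hHdegB i l) (hadjB l j))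
      rw [h4] at h5
      omega
  -- the linear system
  set m1 : ℕ := (n-1)*d + 1 with hm1def
  set pol : ((Fin n × Fin m1) → RatFunc F) → Fin n → Polynomial (RatFunc F) :=
    fun u l => ∑ a : Fin m1, monomial (a : ℕ) (u (l, a)) with hpoldef
  have hpoldeg : ∀ u l, (pol u l).natDegree ≤ (n-1)*d := by
    intro u l
    refine natDegree_sum_le_of_forall_le _ _ fun a _ => ?_
    exact (natDegree_monomial_le _).trans (Nat.lt_succ_iff.1 a.isLt)
  have hcoeffmul : ∀ (u : (Fin n × Fin m1) → RatFunc F) (l : Fin n)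
      (g : Polynomial (RatFunc F)) (k : ℕ),
      (pol u l * g).coeff k
        = ∑ a : Fin m1, u (l,a) * (if (a:ℕ) ≤ k then g.coeff (k - (a:ℕ)) else 0) := by
    intro u l g k
    rw [hpoldef]
    simp only []
    rw [Finset.sum_mul, finset_sum_coeff]
    refine Finset.sum_congr rfl fun a _ => ?_
    rw [← C_mul_X_pow_eq_monomial]
    have hcomm : C (u (l,a)) * X ^ (a:ℕ) * g = C (u (l,a)) * (g * X ^ (a:ℕ)) := by ring
    rw [hcomm, coeff_C_mul, coeff_mul_X_pow', mul_ite, mul_zero]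
  set κs := {p : Fin n × Fin (n*d+1) // (H p.1 p.1).natDegree ≤ (p.2 : ℕ)} with hκdef
  set Ey : Matrix κs (Fin n × Fin m1) (Polynomial F) :=
    fun p q => if (q.2:ℕ) ≤ ((p.1.2):ℕ) then (A q.1 (p.1.1)).coeff (((p.1.2):ℕ) - (q.2:ℕ)) else 0
    with hEydef
  have hEybound : ∀ p q, (Ey p q).natDegree ≤ e := by
    intro p q
    rw [hEydef]
    dsimp only
    split
    · exact hAy _ _ _
    · simp
  have hEco : ∀ p q, (Ey.map φ) p q
      = if (q.2:ℕ) ≤ ((p.1.2):ℕ) then (B q.1 (p.1.1)).coeff (((p.1.2):ℕ) - (q.2:ℕ)) else 0 := by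
    intro p q
    rw [Matrix.map_apply, hEydef]
    dsimp only
    rw [apply_ite φ, map_zero, hBco]
  have hmulVecE : ∀ u p, (Ey.map φ).mulVec u p
      = (∑ l, pol u l * B l (p.1.1)).coeff ((p.1.2):ℕ) := by
    intro u p
    rw [finset_sum_coeff]
    have hterm : ∀ l, (pol u l * B l p.1.1).coeff ((p.1.2):ℕ)
        = ∑ a : Fin m1, (Ey.map φ) p (l, a) * u (l, a) := by
      intro l
      rw [hcoeffmul]
      refine Finset.sum_congr rfl fun a _ => ?_
      rw [hEco]
      exact mul_comm _ _
    calc (Ey.map φ).mulVec u p = ∑ q : Fin n × Fin m1, (Ey.map φ) p q * u q := rfl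
      _ = ∑ l, ∑ a : Fin m1, (Ey.map φ) p (l,a) * u (l,a) := Fintype.sum_prod_type _
      _ = ∑ l, (pol u l * B l p.1.1).coeff ((p.1.2):ℕ) :=
          Finset.sum_congr rfl fun l _ => (hterm l).symm
  -- injectivity of the system
  have hker : ∀ u, (Ey.map φ).mulVec u = 0 → u = 0 := by
    intro u hu
    have hvdeg : ∀ j, (∑ l, pol u l * B l j).natDegree ≤ n * d := by
      intro j
      refine natDegree_sum_le_of_forall_le _ _ fun l _ => ?_
      refine natDegree_mul_le.trans ?_
      calc (pol u l).natDegree + (B l j).natDegree ≤ (n-1)*d + d :=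
            add_le_add (hpoldeg u l) (hBdeg l j)
        _ = n * d := aux_arith2 n d j.pos
    have hcoeffzero : ∀ (j : Fin n) (k : ℕ), (H j j).natDegree ≤ k →
        (∑ l, pol u l * B l j).coeff k = 0 := by
      intro j k hk
      by_cases hkle : k ≤ n*d
      · have hmem : ((j, ⟨k, Nat.lt_succ_of_le hkle⟩) : Fin n × Fin (n*d+1)).1 = j := rfl
        have := congrFun hu ⟨(j, ⟨k, Nat.lt_succ_of_le hkle⟩), hk⟩
        rw [hmulVecE] at this
        simpa using this
      · exact coeff_eq_zero_of_natDegree_lt (lt_of_le_of_lt (hvdeg j) (by omega))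
    have hdeglt : ∀ j, (∑ l, pol u l * B l j).degree < (H j j).degree := by
      intro j
      rw [degree_eq_natDegree (hHne j)]
      exact (degree_lt_iff_coeff_zero _ _).2 (fun m hm => hcoeffzero j m hm)
    obtain ⟨Uu, hUu⟩ := (Matrix.isUnit_iff_isUnit_det U).2 hU
    set V : Matrix (Fin n) (Fin n) (Polynomial (RatFunc F)) := ↑Uu⁻¹ with hVdef
    have hVU : V * U = 1 := by rw [hVdef, ← hUu]; exact Uu.inv_mul
    have hBVH : B = V * H := by
      rw [hUA, ← Matrix.mul_assoc, hVU, Matrix.one_mul]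
    set c : Fin n → Polynomial (RatFunc F) := fun t => ∑ l, pol u l * V l t with hcdef
    have hshuffle : ∀ (W : Matrix (Fin n) (Fin n) (Polynomial (RatFunc F))) (j : Fin n),
        ∑ l, pol u l * (V * W) l j = ∑ t, c t * W t j := by
      intro W j
      rw [hcdef]
      dsimp only
      calc ∑ l, pol u l * (V * W) l j
          = ∑ l, ∑ t, pol u l * (V l t * W t j) := by
            refine Finset.sum_congr rfl fun l _ => ?_
            rw [Matrix.mul_apply, Finset.mul_sum]
        _ = ∑ t, ∑ l, pol u l * (V l t * W t j) := Finset.sum_comm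
        _ = ∑ t, (∑ l, pol u l * V l t) * W t j := by
            refine Finset.sum_congr rfl fun t _ => ?_
            rw [Finset.sum_mul]
            exact Finset.sum_congr rfl fun l _ => by ring
    have hc0 : ∀ t, c t = 0 := by
      refine aux_reduce_zero H hHtri hHmon c (fun j => ?_)
      rw [← hshuffle H j, ← hBVH]
      exact hdeglt j
    have hpol0 : ∀ l, pol u l = 0 := by
      intro l
      have h1 : pol u l = ∑ l', pol u l' * (1 : Matrix (Fin n) (Fin n) (Polynomial (RatFunc F))) l' l := by
        rw [Finset.sum_eq_single l]
        · rw [Matrix.one_apply_eq, mul_one]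
        · intro b _ hb
          rw [Matrix.one_apply_ne hb, mul_zero]
        · intro hl; exact absurd (Finset.mem_univ l) hl
      rw [h1, ← hVU, hshuffle U l]
      simp [hc0]
    funext q
    obtain ⟨l, a⟩ := q
    have h2 : (pol u l).coeff (a:ℕ) = u (l,a) := by
      rw [hpoldef]
      dsimp only
      rw [finset_sum_coeff, Finset.sum_eq_single a]
      · rw [coeff_monomial, if_pos rfl]
      · intro b _ hb
        rw [coeff_monomial, if_neg (fun h => hb (Fin.ext h))]
      · intro hl; exact absurd (Finset.mem_univ a) hl
    rw [hpol0 l] at h2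
    simpa using h2.symm
  have hinj : Function.Injective (Ey.map φ).mulVec := by
    intro u v huv
    have h1 : (Ey.map φ).mulVec (u - v) = 0 := by
      rw [Matrix.mulVec_sub, huv, sub_self]
    have := hker _ h1
    rwa [sub_eq_zero] at this
  -- the rows of U solve the system
  have hδlt : ∀ i : Fin n, (H i i).natDegree < n*d+1 := fun i => Nat.lt_succ_of_le (hδle i)
  set wv : Fin n → κs → Polynomial F :=
    fun i p => if p.1 = (i, ⟨(H i i).natDegree, hδlt i⟩) then 1 else 0 with hwdef
  have hwdeg : ∀ i p, (wv i p).natDegree = 0 := by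
    intro i p
    rw [hwdef]
    dsimp only
    split <;> simp
  set z : Fin n → (Fin n × Fin m1) → RatFunc F :=
    fun i q => (U i q.1).coeff (q.2:ℕ) with hzdef
  have hpolz : ∀ i l, pol (z i) l = U i l := by
    intro i l
    have hlt : (U i l).natDegree < m1 := Nat.lt_succ_of_le (hUdeg i l)
    conv_rhs => rw [(U i l).as_sum_range' m1 hlt]
    rw [hpoldef]
    dsimp only
    rw [← Fin.sum_univ_eq_sum_range (fun a => monomial a ((U i l).coeff a)) m1]
  have hUBH : ∀ i j, ∑ l, pol (z i) l * B l j = H i j := by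
    intro i j
    rw [hUA, Matrix.mul_apply]
    exact Finset.sum_congr rfl fun l _ => by rw [hpolz i l]
  have hsol : ∀ i, (Ey.map φ).mulVec (z i) = fun p => φ (wv i p) := by
    intro i
    funext p
    rw [hmulVecE, hUBH, hwdef]
    obtain ⟨⟨j, k⟩, hk⟩ := p
    dsimp only at hk ⊢
    by_cases hij : j = i
    · subst hij
      by_cases hkδ : (k:ℕ) = (H j j).natDegree
      · rw [if_pos (by exact Prod.ext rfl (Fin.ext hkδ)), map_one, hkδ]
        exact (hHmon j).coeff_natDegree
      · rw [if_neg, map_zero]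
        · exact coeff_eq_zero_of_natDegree_lt (lt_of_le_of_ne hk (fun h => hkδ h.symm))
        · intro hcon
          exact hkδ (congrArg (fun p : Fin n × Fin (n*d+1) => (p.2 : ℕ)) hcon)
    · rw [if_neg, map_zero]
      · refine coeff_eq_zero_of_degree_lt ?_
        refine lt_of_lt_of_le (hHred i j (fun h => hij (h.symm)) (hHne j)) ?_
        rw [degree_eq_natDegree (hHne j)]
        exact_mod_cast Nat.cast_le.2 hk
      · intro hcon
        exact hij (congrArg Prod.fst hcon)
  -- apply the Cramer representation
  obtain ⟨Δ, hΔ0, hΔdeg, hrep⟩ := aux_system Ey e hEybound hinj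
  have hz := fun i => hrep (z i) (wv i) (hwdeg i) (hsol i)
  choose N hNdeg hNz using hz
  have hcardι : Fintype.card (Fin n × Fin m1) = n * m1 := by simp
  have hbound : Fintype.card (Fin n × Fin m1) * e ≤ n^2*d*e := by
    rw [hcardι, hm1def]
    exact aux_arith n d e hd
  -- representation of coefficients of U
  have hUrep : ∀ i j k, ∃ P : Polynomial F, P.natDegree ≤ n^2*d*e ∧
      (U i j).coeff k = φ P / φ Δ := by
    intro i j k
    by_cases hk : k < m1
    · refine ⟨N i (j, ⟨k, hk⟩), ?_, ?_⟩
      · have := hNdeg i (j, ⟨k, hk⟩)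
        omega
      · exact hNz i (j, ⟨k, hk⟩)
    · refine ⟨0, by simp, ?_⟩
      rw [coeff_eq_zero_of_natDegree_lt (lt_of_le_of_lt (hUdeg i j) (by omega)), map_zero,
        zero_div]
  -- representation of coefficients of H
  have hHrep : ∀ i j k, ∃ P : Polynomial F, P.natDegree ≤ n^2*d*e ∧
      (H i j).coeff k = φ P / φ Δ := by
    intro i j k
    have h1 : (H i j).coeff k
        = ∑ l, ∑ a : Fin m1, z i (l,a) * (if (a:ℕ) ≤ k then (B l j).coeff (k - (a:ℕ)) else 0) := by
      rw [← hUBH i j, finset_sum_coeff]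
      exact Finset.sum_congr rfl fun l _ => hcoeffmul (z i) l (B l j) k
    refine ⟨∑ l, ∑ a : Fin m1, N i (l,a) * (if (a:ℕ) ≤ k then (A l j).coeff (k - (a:ℕ)) else 0),
      ?_, ?_⟩
    · refine le_trans (natDegree_sum_le_of_forall_le _ _ fun l _ => ?_) hbound
      refine natDegree_sum_le_of_forall_le _ _ fun a _ => ?_
      refine natDegree_mul_le.trans ?_
      have h2 : (if (a:ℕ) ≤ k then (A l j).coeff (k - (a:ℕ)) else 0).natDegree ≤ e := by
        split
        · exact hAy _ _ _
        · simp
      have h3 := hNdeg i (l,a)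
      omega
    · rw [h1]
      rw [map_sum, Finset.sum_div]
      refine Finset.sum_congr rfl fun l _ => ?_
      rw [map_sum, Finset.sum_div]
      refine Finset.sum_congr rfl fun a _ => ?_
      rw [hNz i (l,a), map_mul]
      rw [apply_ite φ, map_zero, ← hBco]
      rw [div_mul_eq_mul_div]
  -- final assembly
  refine ⟨?_, ?_, Δ, hΔ0, hΔdeg.trans hbound, ?_⟩
  · intro i j k
    obtain ⟨P, hP, hPc⟩ := hHrep i j k
    obtain ⟨h1, h2, _⟩ := aux_fraction_bounds P Δ hΔ0 _ hPc
    exact ⟨h1.trans hP, h2.trans (hΔdeg.trans hbound)⟩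
  · intro i j k
    obtain ⟨P, hP, hPc⟩ := hUrep i j k
    obtain ⟨h1, h2, _⟩ := aux_fraction_bounds P Δ hΔ0 _ hPc
    exact ⟨h1.trans hP, h2.trans (hΔdeg.trans hbound)⟩
  · intro i j k
    obtain ⟨P, hP, hPc⟩ := hHrep i j k
    obtain ⟨_, _, h3⟩ := aux_fraction_bounds P Δ hΔ0 _ hPc
    obtain ⟨P', hP', hPc'⟩ := hUrep i j k
    obtain ⟨_, _, h3'⟩ := aux_fraction_bounds P' Δ hΔ0 _ hPc'
    exact ⟨h3, h3'⟩
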